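/- Let x_n = 1/2ⁿ for all n ∈ ℕ, and let (y_n) be a sequence of real numbers such that ∑_n y_n is absolutely convergent and for all n ∈ ℕ, y_n ≠ ∑_{i>n} y_i. Then E(x_n, y_n) is a Cantor set, i.e. it is nonempty, compact, perfect and totally disconnected. -/

import Mathlib

/-- The achievement set of a sequence: the set of all subsums. -/
def achievementSet {E : Type*} [AddCommMonoid E] [TopologicalSpace E] (f : ℕ → E) : Set E :=
  {s | ∃ A : Set ℕ, s = ∑' n : A, f n}

open Filter Topology Set

namespace AchAux

/-- The weights `1 / 2 ^ (n+1)`. -/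
noncomputable def w (n : ℕ) : ℝ := 1 / 2 ^ (n + 1)

lemma w_pos (n : ℕ) : 0 < w n := by
  unfold w; positivity

lemma summable_w : Summable w := by
  have h : Summable fun n : ℕ => ((1 : ℝ) / 2) ^ n * (1 / 2) :=
    summable_geometric_two.mul_right _
  refine h.congr fun n => ?_
  rw [← pow_succ]
  simp [w, div_pow]

/-- The vector sequence. -/
noncomputable def fv (y : ℕ → ℝ) (n : ℕ) : ℝ × ℝ := ((1 / 2 ^ (n + 1) : ℝ), y n)

/-- The subsum map from the Cantor space. -/
noncomputable def Phi (y : ℕ → ℝ) (b : ℕ → Bool) : ℝ × ℝ :=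
  ∑' n, if b n then fv y n else 0

variable {y : ℕ → ℝ}

lemma norm_ite_le (b : Bool) (v : ℝ × ℝ) : ‖if b then v else 0‖ ≤ ‖v‖ := by
  cases b <;> simp

lemma summable_norm_fv (hy : Summable fun n => |y n|) :
    Summable fun n => ‖fv y n‖ := by
  refine Summable.of_nonneg_of_le (fun n => norm_nonneg _) (fun n => ?_)
    (summable_w.add hy)
  have : ‖fv y n‖ = max ‖(1 / 2 ^ (n + 1) : ℝ)‖ ‖y n‖ := rfl
  rw [this]
  refine max_le ?_ ?_
  · have h1 : ‖(1 / 2 ^ (n + 1) : ℝ)‖ = w n := by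
      rw [Real.norm_eq_abs]; exact abs_of_pos (w_pos n)
    rw [h1]
    have := abs_nonneg (y n)
    linarith
  · have := (w_pos n).le
    rw [Real.norm_eq_abs]
    linarith

lemma summable_term (hy : Summable fun n => |y n|) (b : ℕ → Bool) :
    Summable fun n => if b n then fv y n else 0 :=
  Summable.of_norm_bounded (summable_norm_fv hy) fun n => norm_ite_le (b n) _

lemma summable_w_term (b : ℕ → Bool) : Summable fun n => if b n then w n else 0 := by
  refine Summable.of_nonneg_of_le (fun n => ?_) (fun n => ?_) summable_w
  · cases hb : b n <;> simp [(w_pos n).le]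
  · cases hb : b n <;> simp [(w_pos n).le]

lemma summable_y_term (hy : Summable fun n => |y n|) (b : ℕ → Bool) :
    Summable fun n => if b n then y n else 0 := by
  refine Summable.of_norm_bounded hy fun n => ?_
  cases hb : b n <;> simp [Real.norm_eq_abs]

lemma Phi_eq (hy : Summable fun n => |y n|) (b : ℕ → Bool) :
    Phi y b = (∑' n, (if b n then w n else 0), ∑' n, (if b n then y n else 0)) := by
  have h := ((summable_w_term b).hasSum.prodMk (summable_y_term hy b).hasSum).tsum_eq
  rw [Phi, ← h]
  refine tsum_congr fun n => ?_
  cases hb : b n <;> simp [fv, hb, w, Prod.ext_iff]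

lemma ach_eq (hy : Summable fun n => |y n|) :
    achievementSet (fv y) = Set.range (Phi y) := by
  classical
  ext s
  constructor
  · rintro ⟨A, rfl⟩
    refine ⟨fun n => if n ∈ A then true else false, ?_⟩
    rw [Phi, tsum_subtype A (fv y)]
    refine tsum_congr fun n => ?_
    by_cases hA : n ∈ A <;> simp [Set.indicator_apply, hA]
  · rintro ⟨b, rfl⟩
    refine ⟨{n | b n = true}, ?_⟩
    rw [Phi, tsum_subtype {n | b n = true} (fv y)]
    refine tsum_congr fun n => ?_
    cases hb : b n <;> simp [Set.indicator_apply, hb]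

lemma continuous_Phi (hy : Summable fun n => |y n|) : Continuous (Phi y) := by
  refine continuous_tsum (fun n => ?_) (summable_norm_fv hy) (fun n b => norm_ite_le (b n) _)
  exact (continuous_of_discreteTopology
    (f := fun t : Bool => if t then fv y n else 0)).comp (continuous_apply n)

/-- Equivalence of `ℕ` with naturals greater than `n`. -/
def tailEquiv (n : ℕ) : ℕ ≃ {i : ℕ // n < i} where
  toFun k := ⟨k + (n + 1), by omega⟩
  invFun i := i.1 - (n + 1)
  left_inv k := by
    show k + (n + 1) - (n + 1) = k
    omega
  right_inv i := Subtype.ext (show i.1 - (n + 1) + (n + 1) = i.1 by have := i.2; omega)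

lemma tail_geom (n : ℕ) : ∑' i : ℕ, w (i + (n + 1)) = w n := by
  have h : ∀ i : ℕ, w (i + (n + 1)) = (1 / 2 : ℝ) ^ i * ((1 / 2) ^ (n + 2)) := by
    intro i
    rw [w, show i + (n + 1) + 1 = i + (n + 2) by omega]
    rw [div_pow, div_pow, one_pow, one_pow, div_mul_div_comm, one_mul, pow_add]
  calc ∑' i : ℕ, w (i + (n + 1)) = ∑' i : ℕ, (1 / 2 : ℝ) ^ i * ((1 / 2) ^ (n + 2)) :=
        tsum_congr h
    _ = (∑' i : ℕ, (1 / 2 : ℝ) ^ i) * ((1 / 2) ^ (n + 2)) := tsum_mul_right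
    _ = 2 * ((1 / 2) ^ (n + 2)) := by rw [tsum_geometric_two]
    _ = w n := by
        have h2 : (2 : ℝ) * (1 / 2) ^ (n + 2) = (1 / 2) ^ (n + 1) := by
          rw [pow_succ]; ring
        rw [h2, w, div_pow, one_pow]

set_option maxHeartbeats 1000000 in
/-- Core contradiction lemma. `D` is the difference of two indicator sequences, with first
difference (value `1`) at index `n`; equality of both subsums leads to a contradiction. -/
lemma core (hy : Summable fun n => |y n|)
    (hne : ∀ n : ℕ, y n ≠ ∑' i : {i : ℕ // n < i}, y i)
    (D : ℕ → ℝ) (n : ℕ) (hDle : ∀ k, |D k| ≤ 1) (hDn : D n = 1)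
    (hDlt : ∀ k, k < n → D k = 0)
    (h1 : ∑' k, D k * w k = 0) (h2 : ∑' k, D k * y k = 0) : False := by
  have hsum1 : Summable fun k => D k * w k := by
    refine Summable.of_norm_bounded summable_w fun k => ?_
    rw [Real.norm_eq_abs, abs_mul, abs_of_pos (w_pos k)]
    exact mul_le_of_le_one_left (w_pos k).le (hDle k)
  have hsum2 : Summable fun k => D k * y k := by
    refine Summable.of_norm_bounded hy fun k => ?_
    rw [Real.norm_eq_abs, abs_mul]
    exact mul_le_of_le_one_left (abs_nonneg _) (hDle k)
  have key1 := Summable.sum_add_tsum_nat_add (f := fun k => D k * w k) (n + 1) hsum1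
  have hfs : ∑ i ∈ Finset.range (n + 1), D i * w i = w n := by
    rw [Finset.sum_range_succ, hDn, one_mul]
    have hz : ∑ i ∈ Finset.range n, D i * w i = 0 :=
      Finset.sum_eq_zero fun i hi => by rw [hDlt i (Finset.mem_range.1 hi), zero_mul]
    rw [hz, zero_add]
  rw [h1, hfs] at key1
  -- key1 : w n + ∑' i, D (i + (n+1)) * w (i + (n+1)) = 0
  have hsumtail : Summable fun i => D (i + (n + 1)) * w (i + (n + 1)) :=
    (summable_nat_add_iff (n + 1)).2 hsum1
  have hsw : Summable fun i => w (i + (n + 1)) :=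
    (summable_nat_add_iff (n + 1)).2 summable_w
  have htail1 : ∑' i, D (i + (n + 1)) * w (i + (n + 1)) = -w n := by linarith
  have hsumz : Summable fun i => (1 + D (i + (n + 1))) * w (i + (n + 1)) := by
    refine (hsw.add hsumtail).congr fun i => ?_
    ring
  have hzero : ∑' i, (1 + D (i + (n + 1))) * w (i + (n + 1)) = 0 := by
    have hadd := Summable.tsum_add hsw hsumtail
    have hcg : ∑' i, (1 + D (i + (n + 1))) * w (i + (n + 1)) =
        ∑' i, (w (i + (n + 1)) + D (i + (n + 1)) * w (i + (n + 1))) :=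
      tsum_congr fun i => by ring
    rw [hcg, hadd, tail_geom, htail1]
    ring
  have hDall : ∀ i, D (i + (n + 1)) = -1 := by
    intro i
    by_contra hcon
    have h1' : -1 ≤ D (i + (n + 1)) := (abs_le.1 (hDle _)).1
    have hpos : 0 < 1 + D (i + (n + 1)) := by
      rcases lt_or_eq_of_le h1' with h | h
      · linarith
      · exact absurd h.symm hcon
    have hterm : 0 < (1 + D (i + (n + 1))) * w (i + (n + 1)) :=
      mul_pos hpos (w_pos _)
    have hnn : ∀ j, 0 ≤ (1 + D (j + (n + 1))) * w (j + (n + 1)) := by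
      intro j
      have : -1 ≤ D (j + (n + 1)) := (abs_le.1 (hDle _)).1
      have h0 : 0 ≤ 1 + D (j + (n + 1)) := by linarith
      exact mul_nonneg h0 (w_pos _).le
    have := Summable.tsum_pos hsumz hnn i hterm
    rw [hzero] at this
    exact lt_irrefl 0 this
  -- Second coordinate
  have key2 := Summable.sum_add_tsum_nat_add (f := fun k => D k * y k) (n + 1) hsum2
  have hfs2 : ∑ i ∈ Finset.range (n + 1), D i * y i = y n := by
    rw [Finset.sum_range_succ, hDn, one_mul]
    have hz : ∑ i ∈ Finset.range n, D i * y i = 0 :=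
      Finset.sum_eq_zero fun i hi => by rw [hDlt i (Finset.mem_range.1 hi), zero_mul]
    rw [hz, zero_add]
  rw [h2, hfs2] at key2
  have hysum : Summable fun i => y (i + (n + 1)) :=
    (summable_nat_add_iff (n + 1)).2 hy.of_abs
  have htail2 : ∑' i, D (i + (n + 1)) * y (i + (n + 1)) = -∑' i, y (i + (n + 1)) := by
    rw [← tsum_neg]
    exact tsum_congr fun i => by rw [hDall i]; ring
  rw [htail2] at key2
  have hyn : y n = ∑' i, y (i + (n + 1)) := by linarith
  apply hne n
  have heq := (tailEquiv n).tsum_eq (fun i : {i : ℕ // n < i} => y i)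
  -- heq : ∑' k, y ((tailEquiv n) k) = ∑' i : subtype, y i
  rw [hyn, ← heq]
  rfl

lemma injective_Phi (hy : Summable fun n => |y n|)
    (hne : ∀ n : ℕ, y n ≠ ∑' i : {i : ℕ // n < i}, y i) :
    Function.Injective (Phi y) := by
  intro a b hab
  by_contra hab'
  have hex : ∃ n, a n ≠ b n := Function.ne_iff.1 hab'
  set n := Nat.find hex with hn_def
  have hn : a n ≠ b n := Nat.find_spec hex
  have hmin : ∀ k, k < n → a k = b k := fun k hk => not_not.1 (Nat.find_min hex hk)
  rw [Phi_eq hy a, Phi_eq hy b] at hab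
  injection hab with hab1 hab2
  set D : ℕ → ℝ := fun k => (if a k then (1 : ℝ) else 0) - (if b k then 1 else 0) with hD_def
  have hterm_w : ∀ k, (if a k then w k else 0) - (if b k then w k else 0) = D k * w k := by
    intro k
    cases ha : a k <;> cases hb : b k <;> simp [hD_def, ha, hb]
  have hterm_y : ∀ k, (if a k then y k else 0) - (if b k then y k else 0) = D k * y k := by
    intro k
    cases ha : a k <;> cases hb : b k <;> simp [hD_def, ha, hb]
  have h1 : ∑' k, D k * w k = 0 := by
    calc ∑' k, D k * w k
        = ∑' k, ((if a k then w k else 0) - (if b k then w k else 0)) :=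
          tsum_congr fun k => (hterm_w k).symm
      _ = (∑' k, (if a k then w k else 0)) - (∑' k, (if b k then w k else 0)) :=
          Summable.tsum_sub (summable_w_term a) (summable_w_term b)
      _ = 0 := by rw [hab1, sub_self]
  have h2 : ∑' k, D k * y k = 0 := by
    calc ∑' k, D k * y k
        = ∑' k, ((if a k then y k else 0) - (if b k then y k else 0)) :=
          tsum_congr fun k => (hterm_y k).symm
      _ = (∑' k, (if a k then y k else 0)) - (∑' k, (if b k then y k else 0)) :=
          Summable.tsum_sub (summable_y_term hy a) (summable_y_term hy b)
      _ = 0 := by rw [hab2, sub_self]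
  have hDle : ∀ k, |D k| ≤ 1 := by
    intro k
    cases ha : a k <;> cases hb : b k <;> simp [hD_def, ha, hb]
  have hDlt : ∀ k, k < n → D k = 0 := by
    intro k hk
    rw [hD_def]
    simp [hmin k hk]
  cases ha : a n
  · have hb : b n = true := by
      revert hn
      cases hbn : b n <;> simp [ha, hbn]
    refine core hy hne (fun k => -(D k)) n (fun k => ?_) ?_ (fun k hk => ?_) ?_ ?_
    · show |(-(D k))| ≤ 1
      rw [abs_neg]; exact hDle k
    · show -(D n) = 1
      simp [hD_def, ha, hb]
    · show -(D k) = 0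
      rw [hDlt k hk, neg_zero]
    · have hc : ∑' k, (fun k => -(D k)) k * w k = ∑' k, -(D k * w k) :=
        tsum_congr fun k => neg_mul _ _
      rw [hc, tsum_neg, h1, neg_zero]
    · have hc : ∑' k, (fun k => -(D k)) k * y k = ∑' k, -(D k * y k) :=
        tsum_congr fun k => neg_mul _ _
      rw [hc, tsum_neg, h2, neg_zero]
  · have hb : b n = false := by
      revert hn
      cases hbn : b n <;> simp [ha, hbn]
    refine core hy hne D n hDle ?_ hDlt h1 h2
    simp [hD_def, ha, hb]

lemma norm_diff_update (hy : Summable fun n => |y n|) (b : ℕ → Bool) (n : ℕ) :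
    ‖Phi y (Function.update b n (!b n)) - Phi y b‖ = ‖fv y n‖ := by
  classical
  set b' := Function.update b n (!b n) with hb'
  have hdiff : Phi y b' - Phi y b =
      ∑' k, ((if b' k then fv y k else 0) - (if b k then fv y k else 0)) := by
    rw [Phi, Phi, ← Summable.tsum_sub (summable_term hy b') (summable_term hy b)]
  have hsingle : ∑' k, ((if b' k then fv y k else 0) - (if b k then fv y k else 0)) =
      (if b' n then fv y n else 0) - (if b n then fv y n else 0) := by
    refine tsum_eq_single n fun k hk => ?_
    have : b' k = b k := Function.update_of_ne hk _ _
    rw [this, sub_self]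
  rw [hdiff, hsingle]
  have hb'n : b' n = !b n := Function.update_self _ _ _
  rw [hb'n]
  cases hbn : b n <;> simp

end AchAux

open AchAux in
theorem stmt_6 (y : ℕ → ℝ) (hy : Summable fun n => |y n|)
    (hne : ∀ n : ℕ, y n ≠ ∑' i : {i : ℕ // n < i}, y i) :
    (achievementSet (fun n => ((1 / 2 ^ (n + 1) : ℝ), y n))).Nonempty ∧
    IsCompact (achievementSet (fun n => ((1 / 2 ^ (n + 1) : ℝ), y n))) ∧
    Perfect (achievementSet (fun n => ((1 / 2 ^ (n + 1) : ℝ), y n))) ∧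
    IsTotallyDisconnected (achievementSet (fun n => ((1 / 2 ^ (n + 1) : ℝ), y n))) := by
  have hach : achievementSet (fun n => ((1 / 2 ^ (n + 1) : ℝ), y n)) = Set.range (Phi y) :=
    ach_eq hy
  have hcont : Continuous (Phi y) := continuous_Phi hy
  have hinj : Function.Injective (Phi y) := injective_Phi hy hne
  have hce : Topology.IsClosedEmbedding (Phi y) := hcont.isClosedEmbedding hinj
  rw [hach]
  refine ⟨⟨Phi y (fun _ => false), Set.mem_range_self _⟩, ?_, ?_, ?_⟩
  · rw [← Set.image_univ]
    exact isCompact_univ.image hcont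
  · constructor
    · exact hce.isClosed_range
    · rw [preperfect_iff_nhds]
      rintro x ⟨b, rfl⟩ U hU
      obtain ⟨ε, hε, hball⟩ := Metric.mem_nhds_iff.1 hU
      have htend : Filter.Tendsto (fun n => ‖fv y n‖) Filter.atTop (𝓝 0) :=
        (summable_norm_fv hy).tendsto_atTop_zero
      obtain ⟨n, hn⟩ := (htend.eventually (gt_mem_nhds hε)).exists
      refine ⟨Phi y (Function.update b n (!b n)), ⟨?_, Set.mem_range_self _⟩, ?_⟩
      · apply hball
        rw [Metric.mem_ball, dist_eq_norm, norm_diff_update hy b n]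
        exact hn
      · intro hcon
        have := hinj hcon
        have hne' : Function.update b n (!b n) n ≠ b n := by
          rw [Function.update_self]
          exact Bool.not_ne_self (b n)
        exact hne' (congrFun this n)
  · exact hce.isEmbedding.isTotallyDisconnected_range.2 inferInstance
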